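/- Sobolev-norm bound on the Jacobian error (Proposition 4.2, deterministic form): Under the stated setting, suppose additionally that ‖(deriv H θ).mulVec (x₀ θ - x⋆ θ)‖² ≤ η · ‖deriv x₀ θ - deriv x⋆ θ‖² for some η ≥ 0. Then ‖deriv xₜ θ - deriv x⋆ θ‖² ≤ 2 · ( Matrix.trace ((Polynomial.aeval (H θ) P)^2) + η · Matrix.trace ((Polynomial.aeval (H θ) P.derivative)^2) ) · ‖deriv x₀ θ - deriv x⋆ θ‖². -/

import Mathlib

open Polynomial Matrix

attribute [local instance] Matrix.normedAddCommGroup Matrix.normedSpace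

noncomputable def euclNorm {d : ℕ} (v : Fin d → ℝ) : ℝ := Real.sqrt (∑ i, v i ^ 2)

section aux

variable {d : ℕ} {θ : ℝ}

lemma euclNorm_sq (v : Fin d → ℝ) : euclNorm v ^ 2 = ∑ i, v i ^ 2 := by
  rw [euclNorm, Real.sq_sqrt]; positivity

lemma hasDerivAt_matrix_iff {f : ℝ → Matrix (Fin d) (Fin d) ℝ}
    {f' : Matrix (Fin d) (Fin d) ℝ} :
    HasDerivAt f f' θ ↔ ∀ i j, HasDerivAt (fun t => f t i j) (f' i j) θ := by
  refine hasDerivAt_pi.trans ?_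
  exact forall_congr' fun i => hasDerivAt_pi

lemma HasDerivAt.matrix_mul {f g : ℝ → Matrix (Fin d) (Fin d) ℝ}
    {f' g' : Matrix (Fin d) (Fin d) ℝ}
    (hf : HasDerivAt f f' θ) (hg : HasDerivAt g g' θ) :
    HasDerivAt (fun t => f t * g t) (f' * g θ + f θ * g') θ := by
  rw [hasDerivAt_matrix_iff] at hf hg ⊢
  intro i j
  have h : HasDerivAt (fun t => ∑ k, f t i k * g t k j)
      (∑ k, (f' i k * g θ k j + f θ i k * g' k j)) θ :=
    HasDerivAt.fun_sum fun k _ => (hf i k).mul (hg k j)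
  simpa [Matrix.mul_apply, Matrix.add_apply, Finset.sum_add_distrib] using h

lemma HasDerivAt.matrix_mulVec {f : ℝ → Matrix (Fin d) (Fin d) ℝ}
    {u : ℝ → (Fin d → ℝ)} {f' : Matrix (Fin d) (Fin d) ℝ} {u' : Fin d → ℝ}
    (hf : HasDerivAt f f' θ) (hu : HasDerivAt u u' θ) :
    HasDerivAt (fun t => f t *ᵥ u t) (f' *ᵥ u θ + f θ *ᵥ u') θ := by
  rw [hasDerivAt_matrix_iff] at hf
  rw [hasDerivAt_pi] at hu ⊢
  intro i
  have h : HasDerivAt (fun t => ∑ k, f t i k * u t k)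
      (∑ k, (f' i k * u θ k + f θ i k * u' k)) θ :=
    HasDerivAt.fun_sum fun k _ => (hf i k).mul (hu k)
  simpa [Matrix.mulVec, dotProduct, Finset.sum_add_distrib] using h

lemma hasDerivAt_aeval {H : ℝ → Matrix (Fin d) (Fin d) ℝ} {A' : Matrix (Fin d) (Fin d) ℝ}
    (hH : HasDerivAt H A' θ) (hcomm : H θ * A' = A' * H θ) (P : ℝ[X]) :
    HasDerivAt (fun t => (aeval (H t)) P) (aeval (H θ) P.derivative * A') θ := by
  induction P using Polynomial.induction_on with
  | C a =>
      simp only [aeval_C, derivative_C, map_zero, zero_mul]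
      exact hasDerivAt_const θ ((algebraMap ℝ (Matrix (Fin d) (Fin d) ℝ)) a)
  | add p q hp hq =>
      simp only [map_add, derivative_add, add_mul]
      exact hp.add hq
  | monomial n a ih =>
      have key : (fun t => aeval (H t) (C a * X ^ (n + 1)))
          = fun t => aeval (H t) (C a * X ^ n) * H t := by
        funext t
        rw [pow_succ, ← mul_assoc, _root_.map_mul, aeval_X]
      rw [key]
      have h := ih.matrix_mul hH
      convert h using 1
      have hq : derivative (C a * X ^ (n + 1)) = derivative (C a * X ^ n) * X + C a * X ^ n := by
        rw [pow_succ, ← mul_assoc, derivative_mul, derivative_X, mul_one]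
      rw [hq, map_add, _root_.map_mul, aeval_X, add_mul, mul_assoc, mul_assoc, hcomm]

lemma differentiableAt_det {f : ℝ → Matrix (Fin d) (Fin d) ℝ}
    (hf : ∀ i j, DifferentiableAt ℝ (fun t => f t i j) θ) :
    DifferentiableAt ℝ (fun t => (f t).det) θ := by
  simp only [Matrix.det_apply']
  apply DifferentiableAt.fun_sum
  intro σ _
  exact (DifferentiableAt.fun_finsetProd (fun i _ => hf (σ i) i)).const_mul _

lemma differentiableAt_adjugate {f : ℝ → Matrix (Fin d) (Fin d) ℝ}
    (hf : ∀ i j, DifferentiableAt ℝ (fun t => f t i j) θ) (i j : Fin d) :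
    DifferentiableAt ℝ (fun t => (f t).adjugate i j) θ := by
  simp only [Matrix.adjugate_apply]
  apply differentiableAt_det
  intro k l
  rcases eq_or_ne k j with h | h
  · simp [Matrix.updateRow_apply, h]
  · simp only [Matrix.updateRow_apply, if_neg h]
    exact hf k l

lemma trace_sq_of_isSymm {M : Matrix (Fin d) (Fin d) ℝ} (h : M.IsSymm) :
    Matrix.trace (M ^ 2) = ∑ i, ∑ j, M i j ^ 2 := by
  rw [Matrix.trace, sq]
  refine Finset.sum_congr rfl fun i _ => ?_
  rw [Matrix.diag_apply, Matrix.mul_apply]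
  exact Finset.sum_congr rfl fun j _ => by rw [h.apply i j, sq]

lemma isSymm_aeval {A : Matrix (Fin d) (Fin d) ℝ} (h : A.IsSymm) (P : ℝ[X]) :
    ((aeval A) P).IsSymm := by
  induction P using Polynomial.induction_on' with
  | add p q hp hq =>
      rw [map_add]
      exact hp.add hq
  | monomial n a =>
      rw [Matrix.IsSymm, aeval_monomial, ← Algebra.smul_def, Matrix.transpose_smul,
        Matrix.transpose_pow, show Aᵀ = A from h]

lemma euclNorm_mulVec_sq_le (M : Matrix (Fin d) (Fin d) ℝ) (u : Fin d → ℝ) :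
    euclNorm (M *ᵥ u) ^ 2 ≤ (∑ i, ∑ j, M i j ^ 2) * euclNorm u ^ 2 := by
  rw [euclNorm_sq, euclNorm_sq, Finset.sum_mul]
  refine Finset.sum_le_sum fun i _ => ?_
  have := Finset.sum_mul_sq_le_sq_mul_sq Finset.univ (fun j => M i j) u
  simpa [Matrix.mulVec, dotProduct] using this

lemma euclNorm_add_sq_le (a b : Fin d → ℝ) :
    euclNorm (a + b) ^ 2 ≤ 2 * euclNorm a ^ 2 + 2 * euclNorm b ^ 2 := by
  rw [euclNorm_sq, euclNorm_sq, euclNorm_sq, Finset.mul_sum, Finset.mul_sum,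
    ← Finset.sum_add_distrib]
  refine Finset.sum_le_sum fun i _ => ?_
  simp only [Pi.add_apply]
  nlinarith [sq_nonneg (a i - b i)]

end aux

/-- Sobolev-norm bound on the Jacobian error (Proposition 4.2, deterministic form). -/
theorem sobolev_norm_bound_jacobian {d : ℕ} (hd : 1 ≤ d) (θ : ℝ)
    (H : ℝ → Matrix (Fin d) (Fin d) ℝ) (b x₀ : ℝ → (Fin d → ℝ))
    (hH : DifferentiableAt ℝ H θ) (hb : DifferentiableAt ℝ b θ)
    (hx₀ : DifferentiableAt ℝ x₀ θ)
    (hsym : (H θ).IsSymm) (hpd : (H θ).PosDef)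
    (hcomm : H θ * deriv H θ = deriv H θ * H θ)
    (P : Polynomial ℝ) (hP0 : P.eval 0 = 1)
    (xstar : ℝ → (Fin d → ℝ))
    (hxstar : ∀ θ' : ℝ, xstar θ' = -((H θ')⁻¹.mulVec (b θ')))
    (xt : ℝ → (Fin d → ℝ))
    (hxt : ∀ θ' : ℝ, xt θ' =
      xstar θ' + ((Polynomial.aeval (H θ')) P).mulVec (x₀ θ' - xstar θ'))
    (η : ℝ) (hη : 0 ≤ η)
    (hbound : euclNorm ((deriv H θ).mulVec (x₀ θ - xstar θ)) ^ 2 ≤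
      η * euclNorm (deriv x₀ θ - deriv xstar θ) ^ 2) :
    euclNorm (deriv xt θ - deriv xstar θ) ^ 2 ≤
      2 * (Matrix.trace (((Polynomial.aeval (H θ)) P) ^ 2)
            + η * Matrix.trace (((Polynomial.aeval (H θ)) P.derivative) ^ 2)) *
        euclNorm (deriv x₀ θ - deriv xstar θ) ^ 2 := by
  have hA' : HasDerivAt H (deriv H θ) θ := hH.hasDerivAt
  have hHent : ∀ i j, DifferentiableAt ℝ (fun t => H t i j) θ := fun i j =>
    ((hasDerivAt_matrix_iff.mp hA') i j).differentiableAt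
  have hdet : DifferentiableAt ℝ (fun t => (H t).det) θ := differentiableAt_det hHent
  have hdetne : (H θ).det ≠ 0 := hpd.det_pos.ne'
  have hxstar_diff : DifferentiableAt ℝ xstar θ := by
    have hx : xstar = fun t => -((((H t).det)⁻¹ • (H t).adjugate) *ᵥ b t) := by
      funext t
      rw [hxstar t, Matrix.inv_def, Ring.inverse_eq_inv']
    rw [hx, differentiableAt_pi]
    intro i
    have hbent : ∀ j, DifferentiableAt ℝ (fun t => b t j) θ := fun j =>
      (differentiableAt_pi.mp hb) j
    simp only [Pi.neg_apply, Matrix.mulVec, dotProduct, Matrix.smul_apply, smul_eq_mul]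
    apply DifferentiableAt.neg
    apply DifferentiableAt.fun_sum
    intro j _
    exact ((hdet.inv hdetne).mul (differentiableAt_adjugate hHent i j)).mul (hbent j)
  set A := H θ with hAdef
  set Pm := aeval A P with hPm
  set Pd := aeval A P.derivative with hPd
  set v := x₀ θ - xstar θ with hv
  set w := deriv x₀ θ - deriv xstar θ with hw
  have hwder : HasDerivAt (fun t => x₀ t - xstar t) w θ :=
    hx₀.hasDerivAt.sub hxstar_diff.hasDerivAt
  have hg : HasDerivAt (fun t => (aeval (H t)) P *ᵥ (x₀ t - xstar t))
      ((Pd * deriv H θ) *ᵥ v + Pm *ᵥ w) θ :=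
    (hasDerivAt_aeval hA' hcomm P).matrix_mulVec hwder
  have hxtder : HasDerivAt xt (deriv xstar θ + ((Pd * deriv H θ) *ᵥ v + Pm *ᵥ w)) θ := by
    have hxteq : xt = fun t => xstar t + (aeval (H t)) P *ᵥ (x₀ t - xstar t) := funext hxt
    rw [hxteq]
    exact hxstar_diff.hasDerivAt.add hg
  have hD : deriv xt θ - deriv xstar θ = Pd *ᵥ ((deriv H θ) *ᵥ v) + Pm *ᵥ w := by
    rw [hxtder.deriv, Matrix.mulVec_mulVec]
    abel
  rw [hD]
  set u := (deriv H θ) *ᵥ v with hu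
  have h1 := euclNorm_add_sq_le (Pd *ᵥ u) (Pm *ᵥ w)
  have h2 := euclNorm_mulVec_sq_le Pd u
  have h3 := euclNorm_mulVec_sq_le Pm w
  have hS2 : (0:ℝ) ≤ ∑ i, ∑ j, Pd i j ^ 2 := by positivity
  have htr1 : Matrix.trace (Pm ^ 2) = ∑ i, ∑ j, Pm i j ^ 2 :=
    trace_sq_of_isSymm (isSymm_aeval hsym P)
  have htr2 : Matrix.trace (Pd ^ 2) = ∑ i, ∑ j, Pd i j ^ 2 :=
    trace_sq_of_isSymm (isSymm_aeval hsym P.derivative)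
  rw [htr1, htr2]
  have hb' : euclNorm u ^ 2 ≤ η * euclNorm w ^ 2 := hbound
  have h4 : (∑ i, ∑ j, Pd i j ^ 2) * euclNorm u ^ 2
      ≤ (∑ i, ∑ j, Pd i j ^ 2) * (η * euclNorm w ^ 2) :=
    mul_le_mul_of_nonneg_left hb' hS2
  nlinarith [h1, h2, h3, h4]
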